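/- Let X be a uniformly discrete δ-hyperbolic graph of bounded geometry with basepoint e, and fix n ≥ 1 and k ≤ n/4. Define F(x,k,n) ∈ ℓ^p(X) as the characteristic function of the set F_{x,k,n} of points lying on some geodesic segment g([n,2n]) for g a geodesic from some y with d(x,y) ≤ k to e, excluding points in B(e;3δ). Then there exists a constant C (depending only on δ and the geometry bound) such that ‖F(x,k,n)‖_p^p ≤ C·n for all x, and if additionally d(x,e) ≥ 2n then ‖F(x,k,n)‖_p^p ≥ n - 3δ. -/
import Mathlib


/-- A discrete geodesic of length `L` from `a` to `b`, parametrized by arclength. -/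
def IsDGeodesic {X : Type*} [MetricSpace X] (γ : ℕ → X) (a b : X) (L : ℕ) : Prop :=
  (L : ℝ) = dist a b ∧ γ 0 = a ∧ γ L = b ∧
    ∀ s ≤ L, ∀ t ≤ L, dist (γ s) (γ t) = |(s : ℝ) - (t : ℝ)|

/-- The Rips thin-triangles condition with constant `δ` for discrete geodesics. -/
def DRipsHyperbolic (X : Type*) [MetricSpace X] (δ : ℝ) : Prop :=
  ∀ (a b c : X) (γ₁ γ₂ γ₃ : ℕ → X) (L₁ L₂ L₃ : ℕ),
    IsDGeodesic γ₁ a b L₁ → IsDGeodesic γ₂ b c L₂ → IsDGeodesic γ₃ a c L₃ →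
      ∀ s ≤ L₁, ∃ u : X, ((∃ t ≤ L₂, γ₂ t = u) ∨ (∃ t ≤ L₃, γ₃ t = u)) ∧
        dist (γ₁ s) u ≤ δ

/-- The trumpet set `F_{x,k,n}`: points lying on a segment `g([n,2n])` of some geodesic
`g` from a point `y` with `d(x,y) ≤ k` to the basepoint `e`, excluding `B(e; 3δ)`. -/
def trumpetSet {X : Type*} [MetricSpace X] (e : X) (δ : ℝ) (x : X) (k n : ℕ) : Set X :=
  {z : X | 3 * δ ≤ dist e z ∧
    ∃ (y : X) (γ : ℕ → X) (L t : ℕ), dist x y ≤ (k : ℝ) ∧ IsDGeodesic γ y e L ∧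
      t ≤ L ∧ n ≤ t ∧ t ≤ 2 * n ∧ γ t = z}

/-- Lemma 3.3: in a uniformly discrete δ-hyperbolic graph of bounded geometry, the
characteristic function `F(x,k,n)` of `F_{x,k,n}` satisfies `‖F(x,k,n)‖_p^p ≤ C n`
(the `p`-th power of the `ℓ^p` norm of a characteristic function being the cardinality of
the set), and `‖F(x,k,n)‖_p^p ≥ n - 3δ` whenever `d(x,e) ≥ 2n`. -/
theorem stmt12 {X : Type*} [MetricSpace X] (δ : ℝ) (hδ : 0 ≤ δ) (e : X)
    (hdiscrete : ∀ a b : X, a ≠ b → 1 ≤ dist a b)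
    (hgeodesic : ∀ a b : X, ∃ (γ : ℕ → X) (L : ℕ), IsDGeodesic γ a b L)
    (hbddgeom : ∀ r : ℝ, ∃ N : ℕ, ∀ a : X,
      (Metric.closedBall a r).Finite ∧ (Metric.closedBall a r).ncard ≤ N)
    (hhyp : DRipsHyperbolic X δ) :
    ∃ C : ℝ, 0 < C ∧ ∀ (n k : ℕ), 1 ≤ n → (k : ℝ) ≤ (n : ℝ) / 4 → ∀ x : X,
      (trumpetSet e δ x k n).Finite ∧
      ((trumpetSet e δ x k n).ncard : ℝ) ≤ C * n ∧
      (2 * (n : ℝ) ≤ dist x e → (n : ℝ) - 3 * δ ≤ ((trumpetSet e δ x k n).ncard : ℝ)) := by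
  classical
  obtain ⟨N, hN⟩ := hbddgeom (9 * δ / 2)
  refine ⟨4 * (N + 1), by positivity, fun n k hn hk x => ?_⟩
  have hn' : (1:ℝ) ≤ (n:ℝ) := by exact_mod_cast hn
  have hk0 : (0:ℝ) ≤ (k:ℝ) := Nat.cast_nonneg k
  obtain ⟨M, hM⟩ := hbddgeom ((k:ℝ) + 2 * n)
  -- every point of the trumpet set is within k + 2n of x
  have hsub0 : trumpetSet e δ x k n ⊆ Metric.closedBall x ((k:ℝ) + 2 * n) := by
    rintro z ⟨hz3, y, γ, L, t, hxy, ⟨hLd, h0, hLe, hiso⟩, htL, hnt, ht2, rfl⟩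
    have hdyz : dist y (γ t) = (t:ℝ) := by
      have h := hiso 0 (Nat.zero_le _) t htL
      rw [h0, Nat.cast_zero, zero_sub, abs_neg, abs_of_nonneg (Nat.cast_nonneg t)] at h
      exact h
    have ht2' : (t:ℝ) ≤ 2 * n := by exact_mod_cast ht2
    rw [Metric.mem_closedBall, dist_comm]
    calc dist x (γ t) ≤ dist x y + dist y (γ t) := dist_triangle _ _ _
      _ ≤ (k:ℝ) + 2 * n := by rw [hdyz]; linarith
  have hfin : (trumpetSet e δ x k n).Finite := (hM x).1.subset hsub0
  refine ⟨hfin, ?_, ?_⟩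
  · -- upper bound
    by_cases hcase : (n:ℝ) ≤ 2 * δ
    · -- small n : whole set in one ball of radius 9δ/2
      have hsub : trumpetSet e δ x k n ⊆ Metric.closedBall x (9 * δ / 2) := by
        intro z hz
        have h := hsub0 hz
        rw [Metric.mem_closedBall] at h ⊢
        linarith [hk]
      have h1 : (trumpetSet e δ x k n).ncard ≤ N :=
        le_trans (Set.ncard_le_ncard hsub (hN x).1) (hN x).2
      have h1' : ((trumpetSet e δ x k n).ncard : ℝ) ≤ (N:ℝ) := by exact_mod_cast h1
      have hN0 : (0:ℝ) ≤ (N:ℝ) := Nat.cast_nonneg N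
      nlinarith
    · push_neg at hcase
      obtain ⟨γ₂, L₂, hγ₂⟩ := hgeodesic e x
      set lo : ℝ := dist x e - k - 2*n - δ with hlo_def
      set hi : ℝ := dist x e + k - n + δ with hhi_def
      set T : Finset ℕ := (Finset.range (L₂+1)).filter
        (fun s => lo ≤ (s:ℝ) ∧ (s:ℝ) ≤ hi) with hT
      have hcover : ∀ z ∈ trumpetSet e δ x k n,
          ∃ s ∈ T, z ∈ Metric.closedBall (γ₂ s) (9 * δ / 2) := by
        rintro z ⟨hz3, y, γ, L, t, hxy, hgeo, htL, hnt, ht2, rfl⟩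
        obtain ⟨γ₃, L₃, hγ₃⟩ := hgeodesic y x
        obtain ⟨u, hu, hdu⟩ := hhyp y e x γ γ₂ γ₃ L L₂ L₃ hgeo hγ₂ hγ₃ t htL
        obtain ⟨hLd, h0, hLe, hiso⟩ := hgeo
        have hnt' : (n:ℝ) ≤ (t:ℝ) := by exact_mod_cast hnt
        have ht2' : (t:ℝ) ≤ 2 * n := by exact_mod_cast ht2
        have htL' : (t:ℝ) ≤ (L:ℝ) := by exact_mod_cast htL
        have hdyz : dist y (γ t) = (t:ℝ) := by
          have h := hiso 0 (Nat.zero_le _) t htL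
          rw [h0, Nat.cast_zero, zero_sub, abs_neg, abs_of_nonneg (Nat.cast_nonneg t)] at h
          exact h
        have hdez : dist e (γ t) = (L:ℝ) - (t:ℝ) := by
          have h := hiso L le_rfl t htL
          rw [hLe, abs_of_nonneg (by linarith)] at h
          exact h
        have hLxe : |(L:ℝ) - dist x e| ≤ (k:ℝ) := by
          rw [hLd]
          calc |dist y e - dist x e| ≤ dist y x := abs_dist_sub_le _ _ _
            _ ≤ (k:ℝ) := by rw [dist_comm]; exact hxy
        rcases hu with ⟨s, hsL₂, rfl⟩ | ⟨t', ht'L₃, rfl⟩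
        · -- u on the geodesic from e to x
          obtain ⟨hL₂d, h₂0, h₂L, hiso₂⟩ := hγ₂
          have hds : dist e (γ₂ s) = (s:ℝ) := by
            have h := hiso₂ 0 (Nat.zero_le _) s hsL₂
            rw [h₂0, Nat.cast_zero, zero_sub, abs_neg, abs_of_nonneg (Nat.cast_nonneg s)] at h
            exact h
          have habs : |dist e (γ₂ s) - dist e (γ t)| ≤ δ := by
            calc |dist e (γ₂ s) - dist e (γ t)| = |dist (γ₂ s) e - dist (γ t) e| := by
                  rw [dist_comm (γ₂ s) e, dist_comm (γ t) e]
              _ ≤ dist (γ₂ s) (γ t) := abs_dist_sub_le _ _ _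
              _ = dist (γ t) (γ₂ s) := dist_comm _ _
              _ ≤ δ := hdu
          rw [hds, hdez, abs_le] at habs
          rw [abs_le] at hLxe
          refine ⟨s, ?_, ?_⟩
          · rw [hT, Finset.mem_filter, Finset.mem_range]
            exact ⟨Nat.lt_succ_of_le hsL₂, by rw [hlo_def]; linarith, by rw [hhi_def]; linarith⟩
          · rw [Metric.mem_closedBall, dist_comm]
            calc dist (γ₂ s) (γ t) = dist (γ t) (γ₂ s) := dist_comm _ _
              _ ≤ δ := hdu
              _ ≤ 9 * δ / 2 := by linarith
        · -- u on the geodesic from y to x : impossible since 2δ < n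
          exfalso
          obtain ⟨hL₃d, h₃0, h₃L, hiso₃⟩ := hγ₃
          have hdxu : dist x (γ₃ t') ≤ (k:ℝ) := by
            have h := hiso₃ L₃ le_rfl t' ht'L₃
            rw [h₃L] at h
            have ht'L₃' : (t':ℝ) ≤ (L₃:ℝ) := by exact_mod_cast ht'L₃
            have : dist x (γ₃ t') ≤ (L₃:ℝ) := by
              rw [h, abs_of_nonneg (by linarith)]
              have : (0:ℝ) ≤ (t':ℝ) := Nat.cast_nonneg _
              linarith
            calc dist x (γ₃ t') ≤ (L₃:ℝ) := this
              _ = dist y x := hL₃d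
              _ = dist x y := dist_comm _ _
              _ ≤ (k:ℝ) := hxy
          have h1 : dist x (γ t) ≤ (k:ℝ) + δ := by
            calc dist x (γ t) ≤ dist x (γ₃ t') + dist (γ₃ t') (γ t) := dist_triangle _ _ _
              _ = dist x (γ₃ t') + dist (γ t) (γ₃ t') := by rw [dist_comm (γ₃ t') (γ t)]
              _ ≤ (k:ℝ) + δ := add_le_add hdxu hdu
          have h2 : (t:ℝ) - (k:ℝ) ≤ dist x (γ t) := by
            have := dist_triangle y x (γ t)
            rw [hdyz] at this
            have hxy' : dist y x ≤ (k:ℝ) := by rw [dist_comm]; exact hxy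
            linarith
          linarith [hk]
      -- now count : trumpet set covered by T.card many balls of ≤ N points each
      have hcover' : trumpetSet e δ x k n ⊆
          ↑(T.biUnion (fun s => (hN (γ₂ s)).1.toFinset)) := by
        intro z hz
        obtain ⟨s, hsT, hball⟩ := hcover z hz
        simp only [Finset.coe_biUnion, Set.mem_iUnion, Finset.mem_coe,
          Set.Finite.mem_toFinset]
        exact ⟨s, hsT, hball⟩
      have hcard1 : (trumpetSet e δ x k n).ncard ≤
          (T.biUnion (fun s => (hN (γ₂ s)).1.toFinset)).card := by
        have h := Set.ncard_le_ncard hcover' (Finset.finite_toSet _)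
        rwa [Set.ncard_coe_finset] at h
      have hcard2 : (T.biUnion (fun s => (hN (γ₂ s)).1.toFinset)).card ≤ T.card * N := by
        refine le_trans Finset.card_biUnion_le ?_
        refine le_trans (Finset.sum_le_card_nsmul T _ N (fun s _ => ?_)) (by rw [smul_eq_mul])
        rw [← Set.ncard_eq_toFinset_card _ (hN (γ₂ s)).1]
        exact (hN (γ₂ s)).2
      have hTcard : (T.card : ℝ) ≤ 4 * n := by
        rcases T.eq_empty_or_nonempty with hTe | ⟨s₀, hs₀⟩
        · rw [hTe]; simp only [Finset.card_empty, Nat.cast_zero]; positivity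
        · have hs₀' := hs₀
          rw [hT, Finset.mem_filter] at hs₀'
          obtain ⟨-, hlo₀, hhi₀⟩ := hs₀'
          have hhi0 : (0:ℝ) ≤ hi := le_trans (Nat.cast_nonneg s₀) hhi₀
          have hsubIcc : T ⊆ Finset.Icc ⌈lo⌉₊ ⌊hi⌋₊ := by
            intro s hs
            rw [hT, Finset.mem_filter] at hs
            obtain ⟨-, hlos, hhis⟩ := hs
            rw [Finset.mem_Icc]
            exact ⟨Nat.ceil_le.mpr hlos, Nat.le_floor hhis⟩
          have hab : ⌈lo⌉₊ ≤ ⌊hi⌋₊ := by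
            have := hsubIcc hs₀
            rw [Finset.mem_Icc] at this
            exact le_trans this.1 this.2
          have hcardIcc : T.card ≤ ⌊hi⌋₊ + 1 - ⌈lo⌉₊ := by
            rw [← Nat.card_Icc]
            exact Finset.card_le_card hsubIcc
          have hcast : ((⌊hi⌋₊ + 1 - ⌈lo⌉₊ : ℕ) : ℝ) = (⌊hi⌋₊ : ℝ) + 1 - (⌈lo⌉₊ : ℝ) := by
            have : ⌈lo⌉₊ ≤ ⌊hi⌋₊ + 1 := le_trans hab (Nat.le_succ _)
            push_cast [Nat.cast_sub this]
            ring
          have h1 : (T.card : ℝ) ≤ (⌊hi⌋₊ : ℝ) + 1 - (⌈lo⌉₊ : ℝ) := by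
            rw [← hcast]; exact_mod_cast hcardIcc
          have h2 : (⌊hi⌋₊ : ℝ) ≤ hi := Nat.floor_le hhi0
          have h3 : lo ≤ (⌈lo⌉₊ : ℝ) := Nat.le_ceil lo
          have : hi - lo = 2*k + n + 2*δ := by rw [hhi_def, hlo_def]; ring
          linarith [hk]
      have hfinal : ((trumpetSet e δ x k n).ncard : ℝ) ≤ (T.card : ℝ) * N := by
        have : (trumpetSet e δ x k n).ncard ≤ T.card * N := le_trans hcard1 hcard2
        exact_mod_cast this
      have hN0 : (0:ℝ) ≤ (N:ℝ) := Nat.cast_nonneg N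
      calc ((trumpetSet e δ x k n).ncard : ℝ) ≤ (T.card : ℝ) * N := hfinal
        _ ≤ 4 * n * N := by nlinarith
        _ ≤ 4 * (N + 1) * n := by nlinarith
  · -- lower bound
    intro hdist
    rcases le_or_gt (n:ℝ) (3*δ) with hsmall | hbig
    · have : (0:ℝ) ≤ ((trumpetSet e δ x k n).ncard : ℝ) := Nat.cast_nonneg _
      linarith
    · set m : ℕ := ⌈3*δ⌉₊ with hm_def
      have hm3 : 3*δ ≤ (m:ℝ) := Nat.le_ceil _
      have hm3' : (m:ℝ) < 3*δ + 1 := Nat.ceil_lt_add_one (by linarith)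
      have hmn : m ≤ n := Nat.ceil_le.mpr (le_of_lt hbig)
      obtain ⟨γ, L, hγ⟩ := hgeodesic x e
      obtain ⟨hLd, h0, hLe, hiso⟩ := hγ
      have hL2n : 2*n ≤ L := by
        have : ((2*n : ℕ) : ℝ) ≤ (L:ℝ) := by push_cast; rw [hLd]; linarith
        exact_mod_cast this
      set S : Finset ℕ := Finset.Icc n (2*n - m) with hS_def
      have hmem : ∀ t ∈ S, γ t ∈ trumpetSet e δ x k n := by
        intro t ht
        rw [hS_def, Finset.mem_Icc] at ht
        obtain ⟨hnt, ht2m⟩ := ht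
        have ht2 : t ≤ 2*n := le_trans ht2m (Nat.sub_le _ _)
        have htL : t ≤ L := le_trans ht2 hL2n
        have htL' : (t:ℝ) ≤ (L:ℝ) := by exact_mod_cast htL
        have ht2m' : (t:ℝ) ≤ 2*(n:ℝ) - (m:ℝ) := by
          have h1 : ((t:ℕ):ℝ) ≤ ((2*n - m : ℕ) : ℝ) := by exact_mod_cast ht2m
          have h2 : ((2*n - m : ℕ) : ℝ) = 2*(n:ℝ) - (m:ℝ) := by
            have : m ≤ 2*n := le_trans hmn (by omega)
            push_cast [Nat.cast_sub this]
            ring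
          linarith [h1.trans_eq h2]
        refine ⟨?_, x, γ, L, t, by rw [dist_self]; exact hk0, ⟨hLd, h0, hLe, hiso⟩,
          htL, hnt, ht2, rfl⟩
        have hdez : dist e (γ t) = (L:ℝ) - (t:ℝ) := by
          have h := hiso L le_rfl t htL
          rw [hLe, abs_of_nonneg (by linarith)] at h
          exact h
        rw [hdez, hLd]
        linarith
      have hinj : Set.InjOn γ ↑S := by
        intro s hs t ht hst
        rw [Finset.mem_coe, hS_def, Finset.mem_Icc] at hs ht
        have hsL : s ≤ L := le_trans (le_trans hs.2 (Nat.sub_le _ _)) hL2n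
        have htL : t ≤ L := le_trans (le_trans ht.2 (Nat.sub_le _ _)) hL2n
        have h := hiso s hsL t htL
        rw [hst, dist_self] at h
        have : |(s:ℝ) - (t:ℝ)| = 0 := h.symm
        have : (s:ℝ) = (t:ℝ) := by
          rw [abs_eq_zero] at this; linarith
        exact_mod_cast this
      have himg : ↑(S.image γ) ⊆ trumpetSet e δ x k n := by
        intro z hz
        rw [Finset.coe_image, Set.mem_image] at hz
        obtain ⟨t, ht, rfl⟩ := hz
        exact hmem t ht
      have hcardle : (S.image γ).card ≤ (trumpetSet e δ x k n).ncard := by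
        rw [Set.ncard_eq_toFinset_card _ hfin]
        apply Finset.card_le_card
        intro z hz
        rw [Set.Finite.mem_toFinset]
        exact himg hz
      have hScard : (S.image γ).card = n + 1 - m := by
        rw [Finset.card_image_of_injOn hinj, hS_def, Nat.card_Icc]
        omega
      have hfinal : ((n + 1 - m : ℕ) : ℝ) ≤ ((trumpetSet e δ x k n).ncard : ℝ) := by
        rw [← hScard]; exact_mod_cast hcardle
      have hcast : ((n + 1 - m : ℕ) : ℝ) = (n:ℝ) + 1 - (m:ℝ) := by
        have : m ≤ n + 1 := le_trans hmn (Nat.le_succ _)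
        push_cast [Nat.cast_sub this]
        ring
      rw [hcast] at hfinal
      linarith
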